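/- Let ψ, ψ₁, ψ₂, … : ℝⁿ → ℝ be convex functions with ψ_ℓ → ψ pointwise, and suppose there exist α, β, L, γ > 0 such that α|x| − β ≤ ψ_ℓ(x) ≤ L|x| + γ for all ℓ and x. If b : ℝⁿ → ℝ is continuous and bounded, then ∫ b(∇ψ_ℓ(x)) e^{-ψ_ℓ(x)} dx → ∫ b(∇ψ(x)) e^{-ψ(x)} dx as ℓ → ∞. -/

import Mathlib

open MeasureTheory Filter
open RealInnerProductSpace

lemma convex_sub_le {E : Type*} [NormedAddCommGroup E] [NormedSpace ℝ E]
    {f : E → ℝ} (hf : ConvexOn ℝ Set.univ f) {L γ : ℝ} (hL : 0 ≤ L)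
    (hub : ∀ z, f z ≤ L * ‖z‖ + γ) (x y : E) : f y - f x ≤ L * ‖y - x‖ := by
  rcases eq_or_ne y x with rfl | hne
  · simp
  set s := ‖y - x‖ with hs
  have hs0 : 0 < s := by simpa [hs] using sub_ne_zero.mpr hne
  set u := s⁻¹ • (y - x) with hu
  have hus : s • u = y - x := by rw [hu, smul_smul, mul_inv_cancel₀ hs0.ne', one_smul]
  have hnu : ‖u‖ = 1 := by
    rw [hu, norm_smul, norm_inv, Real.norm_eq_abs, abs_of_pos hs0, ← hs,
      inv_mul_cancel₀ hs0.ne']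
  have key : ∀ t : ℝ, 0 < t → f y - f x ≤ L * s + (s / (s + t)) * (L * ‖x‖ + γ - f x) := by
    intro t ht
    have hst : 0 < s + t := by linarith
    set lam := s / (s + t) with hlam
    have hlam0 : 0 ≤ lam := by positivity
    have hlam1 : lam ≤ 1 := by rw [hlam, div_le_one hst]; linarith
    set z := x + (s + t) • u with hz
    have hyz : (1 - lam) • x + lam • z = y := by
      have h1 : lam • ((s + t) • u) = s • u := by
        rw [smul_smul, hlam, div_mul_cancel₀ _ hst.ne']
      rw [hz, smul_add, h1, hus, ← add_assoc, ← add_smul, sub_add_cancel, one_smul,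
        add_sub_cancel]
    have hcvx := hf.2 (Set.mem_univ x) (Set.mem_univ z)
      (by linarith : (0:ℝ) ≤ 1 - lam) hlam0 (by ring)
    rw [hyz, smul_eq_mul, smul_eq_mul] at hcvx
    have hnz : ‖z‖ ≤ ‖x‖ + (s + t) := by
      calc ‖z‖ ≤ ‖x‖ + ‖(s + t) • u‖ := norm_add_le _ _
        _ = ‖x‖ + (s + t) := by rw [norm_smul, hnu, Real.norm_eq_abs, abs_of_pos hst, mul_one]
    have hz_ub : f z ≤ L * (‖x‖ + (s + t)) + γ :=
      (hub z).trans (by nlinarith)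
    have h2 : f y - f x ≤ lam * (f z - f x) := by nlinarith
    have h3 : lam * (f z - f x) ≤ lam * (L * (‖x‖ + (s + t)) + γ - f x) := by nlinarith
    have h4 : lam * (L * (‖x‖ + (s + t)) + γ - f x)
        = L * s + lam * (L * ‖x‖ + γ - f x) := by
      rw [hlam]; field_simp; ring
    linarith
  have hlim : Tendsto (fun t : ℝ => L * s + (s / (s + t)) * (L * ‖x‖ + γ - f x))
      atTop (nhds (L * s)) := by
    have h1 : Tendsto (fun t : ℝ => s / (s + t)) atTop (nhds 0) :=
      Tendsto.div_atTop tendsto_const_nhds (tendsto_atTop_add_const_left _ s tendsto_id)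
    have := ((h1.mul_const (L * ‖x‖ + γ - f x)).const_add (L * s))
    simpa using this
  exact ge_of_tendsto hlim (eventually_atTop.2 ⟨1, fun t ht => key t (by linarith)⟩)

lemma convex_lipschitzWith {E : Type*} [NormedAddCommGroup E] [NormedSpace ℝ E]
    {f : E → ℝ} (hf : ConvexOn ℝ Set.univ f) {L γ : ℝ} (hL : 0 ≤ L)
    (hub : ∀ z, f z ≤ L * ‖z‖ + γ) : LipschitzWith L.toNNReal f := by
  refine LipschitzWith.of_dist_le_mul fun x y => ?_
  rw [Real.dist_eq, Real.coe_toNNReal _ hL, dist_eq_norm, abs_sub_le_iff]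
  constructor
  · exact convex_sub_le hf hL hub y x
  · rw [norm_sub_rev]
    exact convex_sub_le hf hL hub x y

lemma convex_subgrad {E : Type*} [NormedAddCommGroup E] [NormedSpace ℝ E]
    {f : E → ℝ} (hf : ConvexOn ℝ Set.univ f) {D : E →L[ℝ] ℝ} {x : E}
    (hd : HasFDerivAt f D x) (y : E) : f x + D (y - x) ≤ f y := by
  set g : ℝ → ℝ := fun t => f (x + t • (y - x)) with hg
  have hgd : HasDerivAt g (D (y - x)) 0 := by
    have h1 : HasDerivAt (fun t : ℝ => x + t • (y - x)) (y - x) 0 := by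
      simpa using ((hasDerivAt_id (0:ℝ)).smul_const (y - x)).const_add x
    have hd' : HasFDerivAt f D ((fun t : ℝ => x + t • (y - x)) 0) := by simpa using hd
    exact hd'.comp_hasDerivAt 0 h1
  have hslope : Tendsto (slope g 0) (nhdsWithin 0 (Set.Ioi 0)) (nhds (D (y - x))) :=
    (hasDerivAt_iff_tendsto_slope.mp hgd).mono_left
      (nhdsWithin_mono _ (fun t ht => ne_of_gt ht))
  have hb : ∀ᶠ t in nhdsWithin 0 (Set.Ioi 0), slope g 0 t ≤ f y - f x := by
    filter_upwards [Ioo_mem_nhdsGT_of_mem (Set.mem_Ico.2 ⟨le_refl (0:ℝ), one_pos⟩)]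
      with t ht
    have ht0 : 0 < t := ht.1
    have ht1 : t < 1 := ht.2
    have hxy : x + t • (y - x) = (1 - t) • x + t • y := by
      rw [smul_sub, sub_smul, one_smul]; abel
    have hcvx := hf.2 (Set.mem_univ x) (Set.mem_univ y)
      (by linarith : (0:ℝ) ≤ 1 - t) ht0.le (by ring)
    rw [← hxy, smul_eq_mul, smul_eq_mul] at hcvx
    have hg0 : g 0 = f x := by simp [hg]
    rw [slope_def_field, hg0, sub_zero, div_le_iff₀ ht0]
    nlinarith
  have := le_of_tendsto hslope hb
  linarith

lemma subgrad_unique {E : Type*} [NormedAddCommGroup E] [InnerProductSpace ℝ E]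
    [CompleteSpace E] {f : E → ℝ} {x g : E}
    (hd : DifferentiableAt ℝ f x) (hsub : ∀ y, f x + ⟪g, y - x⟫ ≤ f y) :
    g = gradient f x := by
  have hgr : HasGradientAt f (gradient f x) x := hd.hasGradientAt
  have key : ∀ v : E, ⟪gradient f x, v⟫ = ⟪g, v⟫ := by
    intro v
    set φ : ℝ → ℝ := fun t => f (x + t • v) - f x - t * ⟪g, v⟫ with hφ
    have hφ0 : φ 0 = 0 := by simp [hφ]
    have hφnn : ∀ t, 0 ≤ φ t := by
      intro t
      have := hsub (x + t • v)
      rw [add_sub_cancel_left, real_inner_smul_right] at this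
      simp only [hφ]
      linarith
    have hder : HasDerivAt φ (⟪gradient f x, v⟫ - ⟪g, v⟫) 0 := by
      have h1 : HasDerivAt (fun t : ℝ => x + t • v) v 0 := by
        simpa using ((hasDerivAt_id (0:ℝ)).smul_const v).const_add x
      have hd' : HasFDerivAt f ((InnerProductSpace.toDual ℝ E) (gradient f x))
          ((fun t : ℝ => x + t • v) 0) := by simpa using hgr.hasFDerivAt
      have h2 := hd'.comp_hasDerivAt 0 h1
      have h3 : HasDerivAt (fun t : ℝ => f (x + t • v)) ⟪gradient f x, v⟫ 0 := by
        simpa [InnerProductSpace.toDual_apply_apply, Function.comp_def] using h2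
      have h4 : HasDerivAt (fun t : ℝ => t * ⟪g, v⟫) ⟪g, v⟫ 0 := by
        simpa using (hasDerivAt_id (0:ℝ)).mul_const ⟪g, v⟫
      exact (h3.sub_const (f x)).sub h4
    have hmin : IsLocalMin φ 0 := by
      refine Filter.Eventually.of_forall fun t => ?_
      rw [hφ0]; exact hφnn t
    have := hmin.hasDerivAt_eq_zero hder
    linarith [this]
  have : ∀ v : E, ⟪gradient f x - g, v⟫ = 0 := by
    intro v; rw [inner_sub_left]; rw [key v]; ring
  have h0 := this (gradient f x - g)
  rw [inner_self_eq_zero] at h0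
  have := sub_eq_zero.mp h0
  exact this.symm

lemma integrable_exp_neg_abs_1d {c : ℝ} (hc : 0 < c) :
    Integrable (fun t : ℝ => Real.exp (-(c * |t|))) := by
  have hIoi : IntegrableOn (fun t : ℝ => Real.exp (-(c * |t|))) (Set.Ioi 0) := by
    refine (exp_neg_integrableOn_Ioi 0 hc).congr_fun ?_ measurableSet_Ioi
    intro t ht
    have : |t| = t := abs_of_pos ht
    simp [this]
  have hIci : IntegrableOn (fun t : ℝ => Real.exp (-(c * |t|))) (Set.Ici 0) :=
    (integrableOn_Ici_iff_integrableOn_Ioi).2 hIoi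
  have hIic : IntegrableOn (fun t : ℝ => Real.exp (-(c * |t|))) (Set.Iic 0) := by
    have A : MeasurableEmbedding (fun x : ℝ => -x) :=
      (Homeomorph.neg ℝ).isClosedEmbedding.measurableEmbedding
    have hmap : volume.restrict (Set.Iic (0:ℝ))
        = Measure.map (fun x : ℝ => -x) (volume.restrict (Set.Ici (0:ℝ))) := by
      conv_lhs => rw [← Measure.map_neg_eq_self (volume : Measure ℝ)]
      rw [A.restrict_map, show (fun x : ℝ => -x) ⁻¹' Set.Iic 0 = Set.Ici 0 by ext t; simp]
    unfold IntegrableOn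
    rw [hmap, A.integrable_map_iff]
    refine hIci.congr_fun ?_ measurableSet_Ici
    intro t _
    simp [Function.comp]
  rw [← integrableOn_univ, ← Set.Iic_union_Ioi (a := (0:ℝ)), integrableOn_union]
  exact ⟨hIic, hIoi⟩

lemma integrable_exp_neg_norm (n : ℕ) {c : ℝ} (hc : 0 < c) :
    Integrable (fun x : EuclideanSpace ℝ (Fin n) => Real.exp (-(c * ‖x‖))) := by
  have hmp := (EuclideanSpace.volume_preserving_symm_measurableEquiv_toLp (Fin n)).symm
  rw [← hmp.integrable_comp_emb (MeasurableEquiv.measurableEmbedding _)]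
  have hcomp : ((fun x : EuclideanSpace ℝ (Fin n) => Real.exp (-(c * ‖x‖))) ∘
      (MeasurableEquiv.toLp 2 (Fin n → ℝ)).symm.symm)
      = fun y : Fin n → ℝ => Real.exp (-(c * Real.sqrt (∑ i, (y i) ^ 2))) := by
    funext y
    simp only [Function.comp_apply, MeasurableEquiv.symm_symm, MeasurableEquiv.coe_toLp,
      EuclideanSpace.norm_eq]
    have : ∀ i, ‖(WithLp.toLp 2 y) i‖ ^ 2 = y i ^ 2 := by
      intro i
      simp [Real.norm_eq_abs, sq_abs]
    simp_rw [this]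
  rw [hcomp]
  have hint : Integrable (fun y : Fin n → ℝ => ∏ i, Real.exp (-(c / n * |y i|))) :=
    Integrable.fintype_prod (f := fun (_ : Fin n) (t : ℝ) => Real.exp (-(c / n * |t|)))
      (fun i => integrable_exp_neg_abs_1d (div_pos hc (Nat.cast_pos.2 i.pos)))
  refine hint.mono ?_ ?_
  · refine Continuous.aestronglyMeasurable ?_
    exact Real.continuous_exp.comp ((continuous_const.mul (Real.continuous_sqrt.comp
      (continuous_finset_sum _ fun i _ => (continuous_apply i).pow 2))).neg)
  · refine Filter.Eventually.of_forall fun y => ?_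
    have hS : (0:ℝ) ≤ ∑ i, (y i) ^ 2 := Finset.sum_nonneg fun i _ => sq_nonneg _
    have hcoord : ∀ i : Fin n, |y i| ≤ Real.sqrt (∑ j, (y j) ^ 2) := by
      intro i
      rw [← Real.sqrt_sq_eq_abs]
      exact Real.sqrt_le_sqrt (Finset.single_le_sum (fun j _ => sq_nonneg (y j))
        (Finset.mem_univ i))
    have hsum : ∑ i, |y i| ≤ n * Real.sqrt (∑ j, (y j) ^ 2) := by
      calc ∑ i, |y i| ≤ ∑ _i : Fin n, Real.sqrt (∑ j, (y j) ^ 2) :=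
            Finset.sum_le_sum fun i _ => hcoord i
        _ = n * Real.sqrt (∑ j, (y j) ^ 2) := by
            rw [Finset.sum_const, Finset.card_univ, Fintype.card_fin, nsmul_eq_mul]
    have hkey : c / n * ∑ i, |y i| ≤ c * Real.sqrt (∑ j, (y j) ^ 2) := by
      rcases Nat.eq_zero_or_pos n with h0 | hn
      · subst h0
        simp [Real.sqrt_nonneg, mul_nonneg hc.le (Real.sqrt_nonneg _)]
      · have hn' : (0:ℝ) < n := Nat.cast_pos.2 hn
        have h1 : c / n * ∑ i, |y i| ≤ c / n * (n * Real.sqrt (∑ j, (y j) ^ 2)) :=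
          mul_le_mul_of_nonneg_left hsum (by positivity)
        have h2 : c / n * (n * Real.sqrt (∑ j, (y j) ^ 2))
            = c * Real.sqrt (∑ j, (y j) ^ 2) := by
          field_simp
        linarith
    rw [Real.norm_eq_abs, Real.abs_exp, Real.norm_eq_abs, ← Real.exp_sum, abs_of_pos
      (Real.exp_pos _)]
    apply Real.exp_le_exp.2
    have : ∑ i : Fin n, -(c / ↑n * |y i|) = -(c / ↑n * ∑ i, |y i|) := by
      rw [Finset.mul_sum, ← Finset.sum_neg_distrib]
    rw [this]
    linarith

lemma tendsto_gradient_of_convex {E : Type*} [NormedAddCommGroup E]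
    [InnerProductSpace ℝ E] [FiniteDimensional ℝ E]
    {ψ : E → ℝ} {ψs : ℕ → E → ℝ} {L : NNReal}
    (hψs : ∀ l, ConvexOn ℝ Set.univ (ψs l))
    (hptwise : ∀ x, Tendsto (fun l => ψs l x) atTop (nhds (ψ x)))
    (hlip : ∀ l, LipschitzWith L (ψs l))
    {x : E} (hdx : DifferentiableAt ℝ ψ x) (hdl : ∀ l, DifferentiableAt ℝ (ψs l) x) :
    Tendsto (fun l => gradient (ψs l) x) atTop (nhds (gradient ψ x)) := by
  have hbound : ∀ l, gradient (ψs l) x ∈ Metric.closedBall (0 : E) L := by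
    intro l
    rw [Metric.mem_closedBall, dist_zero_right]
    have h1 : ‖fderiv ℝ (ψs l) x‖ ≤ L := norm_fderiv_le_of_lipschitz ℝ (hlip l)
    have h2 : ‖gradient (ψs l) x‖ = ‖fderiv ℝ (ψs l) x‖ :=
      (InnerProductSpace.toDual ℝ E).symm.norm_map (fderiv ℝ (ψs l) x)
    rw [h2]; exact h1
  apply tendsto_of_subseq_tendsto
  intro ns hns
  obtain ⟨g, _, φ, hφ, hconv⟩ :=
    (isCompact_closedBall (0:E) L).tendsto_subseq (fun k => hbound (ns k))
  refine ⟨φ, ?_⟩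
  have hT : Tendsto (fun k => ns (φ k)) atTop atTop := hns.comp hφ.tendsto_atTop
  have hsub : ∀ y, ψ x + ⟪g, y - x⟫ ≤ ψ y := by
    intro y
    have hk : ∀ k, ψs (ns (φ k)) x + ⟪gradient (ψs (ns (φ k))) x, y - x⟫
        ≤ ψs (ns (φ k)) y := by
      intro k
      have h := convex_subgrad (hψs (ns (φ k)))
        ((hdl (ns (φ k))).hasGradientAt.hasFDerivAt) y
      simpa [InnerProductSpace.toDual_apply_apply] using h
    have hleft : Tendsto
        (fun k => ψs (ns (φ k)) x + ⟪gradient (ψs (ns (φ k))) x, y - x⟫)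
        atTop (nhds (ψ x + ⟪g, y - x⟫)) :=
      ((hptwise x).comp hT).add (hconv.inner tendsto_const_nhds)
    exact le_of_tendsto_of_tendsto' hleft ((hptwise y).comp hT) hk
  have hgeq : g = gradient ψ x := subgrad_unique hdx hsub
  rw [← hgeq]
  exact hconv

theorem stmt_19 (n : ℕ) (ψ : EuclideanSpace ℝ (Fin n) → ℝ)
    (ψs : ℕ → EuclideanSpace ℝ (Fin n) → ℝ)
    (hψ : ConvexOn ℝ Set.univ ψ) (hψs : ∀ l, ConvexOn ℝ Set.univ (ψs l))
    (hptwise : ∀ x, Tendsto (fun l => ψs l x) atTop (nhds (ψ x)))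
    (α β L γ : ℝ) (hα : 0 < α) (hβ : 0 < β) (hL : 0 < L) (hγ : 0 < γ)
    (hbounds : ∀ l, ∀ x : EuclideanSpace ℝ (Fin n),
      α * ‖x‖ - β ≤ ψs l x ∧ ψs l x ≤ L * ‖x‖ + γ)
    (b : EuclideanSpace ℝ (Fin n) → ℝ) (hb : Continuous b)
    (hbbdd : ∃ Cb : ℝ, ∀ y, |b y| ≤ Cb) :
    Tendsto (fun l => ∫ x, b (gradient (ψs l) x) * Real.exp (-(ψs l x)))
      atTop (nhds (∫ x, b (gradient ψ x) * Real.exp (-ψ x))) := by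
  obtain ⟨Cb, hCb⟩ := hbbdd
  have hCb0 : 0 ≤ Cb := le_trans (abs_nonneg _) (hCb 0)
  have hlips : ∀ l, LipschitzWith L.toNNReal (ψs l) :=
    fun l => convex_lipschitzWith (hψs l) hL.le (fun z => (hbounds l z).2)
  have hlipψ : LipschitzWith L.toNNReal ψ := by
    refine LipschitzWith.of_dist_le_mul fun x y => ?_
    have hdist : Tendsto (fun l => dist (ψs l x) (ψs l y)) atTop
        (nhds (dist (ψ x) (ψ y))) := (hptwise x).dist (hptwise y)
    exact le_of_tendsto hdist
      (Eventually.of_forall fun l => (hlips l).dist_le_mul x y)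
  have haed : ∀ᵐ x : EuclideanSpace ℝ (Fin n), DifferentiableAt ℝ ψ x ∧
      ∀ l, DifferentiableAt ℝ (ψs l) x := by
    filter_upwards [hlipψ.ae_differentiableAt,
      ae_all_iff.2 (fun l => (hlips l).ae_differentiableAt)] with x h1 h2
    exact ⟨h1, h2⟩
  have hgradm : ∀ f : EuclideanSpace ℝ (Fin n) → ℝ, Measurable (gradient f) := by
    intro f
    have h1 : Measurable (fderiv ℝ f) := measurable_fderiv ℝ f
    exact ((InnerProductSpace.toDual ℝ
      (EuclideanSpace ℝ (Fin n))).symm.continuous.measurable).comp h1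
  apply MeasureTheory.tendsto_integral_of_dominated_convergence
      (bound := fun x => Cb * Real.exp (β - α * ‖x‖))
  · intro l
    exact ((hb.measurable.comp (hgradm (ψs l))).mul
      (Real.measurable_exp.comp ((hlips l).continuous.measurable.neg))).aestronglyMeasurable
  · have h1 := (integrable_exp_neg_norm n hα).const_mul (Cb * Real.exp β)
    refine h1.congr (Eventually.of_forall fun x => ?_)
    show Cb * Real.exp β * Real.exp (-(α * ‖x‖)) = Cb * Real.exp (β - α * ‖x‖)
    rw [show β - α * ‖x‖ = β + -(α * ‖x‖) by ring, Real.exp_add]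
    ring
  · intro l
    refine Eventually.of_forall fun x => ?_
    rw [Real.norm_eq_abs, abs_mul, Real.abs_exp]
    have h1 : Real.exp (-ψs l x) ≤ Real.exp (β - α * ‖x‖) :=
      Real.exp_le_exp.2 (by linarith [(hbounds l x).1])
    exact mul_le_mul (hCb _) h1 (Real.exp_pos _).le hCb0
  · filter_upwards [haed] with x hx
    have hgrad := tendsto_gradient_of_convex hψs hptwise hlips hx.1 hx.2
    exact ((hb.tendsto (gradient ψ x)).comp hgrad).mul
      ((Real.continuous_exp.tendsto (-ψ x)).comp (hptwise x).neg)
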